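/- arXiv:0803.1535 — 3 statements merged into one kernel-verified Lean document; each statement's English description precedes it below -/
import Mathlib

section
/- Let K be a field, c ≥ 1 an integer, and L_0, L_1, …, L_{c+1} linearly independent linear forms in a polynomial ring S = K[x_1,…,x_n]. Let M be the ideal generated by the 2×2 minors L_i L_{j+1} − L_{i+1} L_j (0 ≤ i < j ≤ c) of the non-generic scroll block with rows (L_0,…,L_c) and (L_1,…,L_{c+1}). Let Δ be a K-subspace of the space of linear forms of S, and suppose M ⊆ (Δ). Then either (1) {L_0, L_1, …, L_c} ⊆ Δ or {L_1, L_2, …, L_{c+1}} ⊆ Δ, or (2) there exist a linear form H ∉ Δ and a nonzero constant α ∈ K such that L_j − α^j H ∈ Δ for all j = 0, 1, …, c+1. -/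
open MvPolynomial

namespace ScrollAux


lemma exists_single_of_degree_one {σ : Type*} (d : σ →₀ ℕ) (h : Finsupp.degree d = 1) :
    ∃ i, d = Finsupp.single i 1 := by
  classical
  have hd0 : d ≠ 0 := by rintro rfl; simp at h
  obtain ⟨i, hi⟩ : ∃ i, d i ≠ 0 := by
    by_contra hcon
    push_neg at hcon
    exact hd0 (Finsupp.ext fun j => hcon j)
  refine ⟨i, ?_⟩
  have hle : d i ≤ 1 := h ▸ Finsupp.le_degree i d
  have hdi : d i = 1 := by omega
  have hmem : i ∈ d.support := Finsupp.mem_support_iff.mpr hi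
  have hsum : d i + ∑ j ∈ d.support.erase i, d j = 1 := by
    rw [Finset.add_sum_erase _ _ hmem]; exact h
  have hrest : ∀ j ∈ d.support.erase i, d j = 0 := by
    intro j hj
    have : ∑ j ∈ d.support.erase i, d j = 0 := by omega
    exact Finset.sum_eq_zero_iff.mp this j hj
  ext j
  rcases eq_or_ne j i with rfl | hne
  · simp [hdi]
  · rw [Finsupp.single_apply, if_neg (by exact fun hh => hne hh.symm)]
    by_cases hjs : j ∈ d.support
    · exact hrest j (Finset.mem_erase.mpr ⟨hne, hjs⟩)
    · simpa using Finsupp.notMem_support_iff.mp hjs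

lemma degree_one_of_coeff {σ : Type*} {R : Type*} [CommRing R] {f : MvPolynomial σ R}
    (hf : f.IsHomogeneous 1) {d : σ →₀ ℕ} (hd : coeff d f ≠ 0) :
    ∃ i, d = Finsupp.single i 1 := by
  apply exists_single_of_degree_one
  rw [Finsupp.degree_eq_weight_one]
  exact hf hd

variable {K : Type} [Field K] {n : ℕ}

lemma eq_sum_single {f : MvPolynomial (Fin n) K} (hf : f.IsHomogeneous 1) :
    f = ∑ i : Fin n, coeff (Finsupp.single i 1) f • X i := by
  ext d
  rw [coeff_sum]
  simp only [coeff_smul, coeff_X', smul_eq_mul, mul_ite, mul_one, mul_zero]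
  by_cases hd : ∃ i : Fin n, d = Finsupp.single i 1
  · obtain ⟨i, rfl⟩ := hd
    have hiff : ∀ i' : Fin n, (Finsupp.single i' 1 = Finsupp.single i 1) ↔ i' = i := by
      intro i'
      constructor
      · intro hh
        by_contra hne
        have := DFunLike.congr_fun hh i'
        rw [Finsupp.single_apply, Finsupp.single_apply, if_pos rfl,
          if_neg (fun h => hne h.symm)] at this
        exact one_ne_zero this
      · rintro rfl; rfl
    simp_rw [hiff]
    rw [Finset.sum_ite_eq' Finset.univ i (fun i' => coeff (Finsupp.single i' 1) f)]
    simp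
  · push_neg at hd
    rw [Finset.sum_eq_zero (fun i _ => if_neg (fun hh => hd i hh.symm))]
    by_contra hc
    obtain ⟨i, rfl⟩ := degree_one_of_coeff hf hc
    exact hd i rfl

lemma aeval_hom1 {f : MvPolynomial (Fin n) K} (hf : f.IsHomogeneous 1)
    (g : Fin n → MvPolynomial (Fin n) K) :
    aeval g f = ∑ i : Fin n, coeff (Finsupp.single i 1) f • g i := by
  conv_lhs => rw [eq_sum_single hf]
  rw [map_sum]
  congr 1
  ext i
  rw [map_smul, aeval_X]

lemma prime_X_mv {m : ℕ} (i : Fin m) : Prime (X i : MvPolynomial (Fin m) K) := by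
  cases m with
  | zero => exact i.elim0
  | succ m =>
    have h0 : Prime (X 0 : MvPolynomial (Fin (m+1)) K) := by
      rw [← MulEquiv.prime_iff (MvPolynomial.finSuccEquiv K m).toMulEquiv]
      show Prime (MvPolynomial.finSuccEquiv K m (X 0))
      rw [finSuccEquiv_X_zero]
      exact Polynomial.prime_X
    have h1 := (MulEquiv.prime_iff
      (renameEquiv K (Equiv.swap (0 : Fin (m+1)) i)).toMulEquiv).mpr h0
    have h2 : (renameEquiv K (Equiv.swap (0 : Fin (m+1)) i)) (X 0) = X i := by
      simp [renameEquiv_apply, rename_X, Equiv.swap_apply_left]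
    rwa [show ((renameEquiv K (Equiv.swap (0 : Fin (m+1)) i)).toMulEquiv (X 0)) =
      (X i : MvPolynomial (Fin (m+1)) K) from h2] at h1

lemma weight_one_single (i : Fin n) :
    Finsupp.weight (1 : Fin n → ℕ) (Finsupp.single i 1) = 1 := by
  rw [Finsupp.weight_apply, Finsupp.sum_single_index] <;> simp

lemma eq_smul_X_of {m1 g : MvPolynomial (Fin n) K} (i : Fin n) (h1 : m1.IsHomogeneous 1)
    (hg : m1 = X i * g) : m1 = coeff 0 g • X i := by
  have hgC : g = C (coeff 0 g) := by
    ext d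
    rcases eq_or_ne d 0 with rfl | hd
    · simp [coeff_C]
    · rw [coeff_C, if_neg (fun hh => hd hh.symm)]
      by_contra hcne
      have hne : coeff (Finsupp.single i 1 + d) m1 ≠ 0 := by
        rw [hg, coeff_X_mul]; exact hcne
      obtain ⟨i', hi'⟩ := degree_one_of_coeff h1 hne
      have hdeg : Finsupp.degree (Finsupp.single i 1 + d) = 1 := by
        rw [hi', Finsupp.degree_eq_weight_one]
        exact weight_one_single i'
      have h1' : Finsupp.degree (Finsupp.single i 1) = 1 := by
        rw [Finsupp.degree_eq_weight_one]
        exact weight_one_single i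
      have hd1 : Finsupp.degree d ≠ 0 := fun hh => hd ((Finsupp.degree_eq_zero_iff d).mp hh)
      rw [Finsupp.degree_eq_weight_one] at hdeg h1' hd1
      rw [map_add, h1'] at hdeg
      exact hd1 (by omega)
  conv_lhs => rw [hg, hgC]
  rw [smul_eq_C_mul]
  ring

lemma smul_hom1 (a : K) {p : MvPolynomial (Fin n) K} (hp : p.IsHomogeneous 1) :
    (a • p).IsHomogeneous 1 :=
  (homogeneousSubmodule (Fin n) K 1).smul_mem a hp

lemma exists_algEquiv (l0 : MvPolynomial (Fin n) K) (hh : l0.IsHomogeneous 1) (h0 : l0 ≠ 0) :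
    ∃ (i : Fin n) (e : MvPolynomial (Fin n) K ≃ₐ[K] MvPolynomial (Fin n) K),
      e (X i) = l0 ∧ ∀ f : MvPolynomial (Fin n) K, f.IsHomogeneous 1 →
        (e.symm f).IsHomogeneous 1 := by
  classical
  obtain ⟨d, hd⟩ : ∃ d, coeff d l0 ≠ 0 := by
    by_contra hcon
    push_neg at hcon
    exact h0 (MvPolynomial.ext _ _ (by simpa using hcon))
  obtain ⟨i₀, rfl⟩ := degree_one_of_coeff hh hd
  set c₀ : K := coeff (Finsupp.single i₀ 1) l0 with hc₀
  have hc₀ne : c₀ ≠ 0 := hd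
  set gb : Fin n → MvPolynomial (Fin n) K := fun j => if j = i₀ then l0 else X j with hgb
  set gf : Fin n → MvPolynomial (Fin n) K :=
    fun j => if j = i₀ then c₀⁻¹ • (X i₀ - (l0 - c₀ • X i₀)) else X j with hgf
  have hgbhom : ∀ j, (gb j).IsHomogeneous 1 := by
    intro j
    rw [hgb]
    by_cases hj : j = i₀ <;> simp only [hj, if_pos, if_neg, ite_true, ite_false]
    · exact hh
    · exact isHomogeneous_X K j
  have hgfhom : ∀ j, (gf j).IsHomogeneous 1 := by
    intro j
    rw [hgf]
    by_cases hj : j = i₀ <;> simp only [hj, ite_true, ite_false]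
    · exact smul_hom1 _ (((isHomogeneous_X K i₀).sub
        (hh.sub (smul_hom1 _ (isHomogeneous_X K i₀)))))
    · exact isHomogeneous_X K j
  -- key computation
  have key : ∀ g : Fin n → MvPolynomial (Fin n) K, (∀ j, j ≠ i₀ → g j = X j) →
      aeval g l0 = l0 + c₀ • (g i₀ - X i₀) := by
    intro g hg
    rw [aeval_hom1 hh g]
    have : ∀ j : Fin n, coeff (Finsupp.single j 1) l0 • g j
        = coeff (Finsupp.single j 1) l0 • X j
          + (if j = i₀ then c₀ • (g i₀ - X i₀) else 0) := by
      intro j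
      by_cases hj : j = i₀
      · subst hj
        rw [if_pos rfl, ← hc₀, ← smul_add]
        congr 1
        ring
      · rw [if_neg hj, hg j hj, add_zero]
    rw [Finset.sum_congr rfl (fun j _ => this j), Finset.sum_add_distrib,
      Finset.sum_ite_eq' Finset.univ i₀ (fun _ => c₀ • (g i₀ - X i₀))]
    rw [← eq_sum_single hh]
    simp
  have hgb_off : ∀ j, j ≠ i₀ → gb j = X j := fun j hj => by rw [hgb]; simp [hj]
  have hgf_off : ∀ j, j ≠ i₀ → gf j = X j := fun j hj => by rw [hgf]; simp [hj]
  have hgbi : gb i₀ = l0 := by rw [hgb]; simp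
  have hgfi : gf i₀ = c₀⁻¹ • (X i₀ - (l0 - c₀ • X i₀)) := by rw [hgf]; simp
  have haevalgb : aeval gb l0 = l0 + c₀ • (l0 - X i₀) := by
    rw [key gb hgb_off, hgbi]
  have haevalgf : aeval gf l0 = X i₀ := by
    rw [key gf hgf_off, hgfi]
    match_scalars <;> field_simp <;> ring
  have hcomp1 : (aeval gb).comp (aeval gf) = AlgHom.id K (MvPolynomial (Fin n) K) := by
    apply MvPolynomial.algHom_ext
    intro j
    simp only [AlgHom.comp_apply, aeval_X, AlgHom.id_apply]
    by_cases hj : j = i₀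
    · subst hj
      rw [hgfi, map_smul, map_sub, map_sub, map_smul, aeval_X, hgbi, haevalgb]
      match_scalars <;> field_simp <;> ring
    · rw [hgf_off j hj, aeval_X, hgb_off j hj]
  have hcomp2 : (aeval gf).comp (aeval gb) = AlgHom.id K (MvPolynomial (Fin n) K) := by
    apply MvPolynomial.algHom_ext
    intro j
    simp only [AlgHom.comp_apply, aeval_X, AlgHom.id_apply]
    by_cases hj : j = i₀
    · subst hj
      rw [hgbi, haevalgf]
    · rw [hgb_off j hj, aeval_X, hgf_off j hj]
  refine ⟨i₀, AlgEquiv.ofAlgHom (aeval gb) (aeval gf) hcomp1 hcomp2, ?_, ?_⟩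
  · show aeval gb (X i₀) = l0
    rw [aeval_X, hgbi]
  · intro f hf
    show (aeval gf f).IsHomogeneous 1
    simpa using hf.aeval gf hgfhom


end ScrollAux

open ScrollAux

/-- **Lemma 2.2.** If the ideal of `2×2` minors of a non-generic scroll block with rows
`(L_0,…,L_c)` and `(L_1,…,L_{c+1})` (linearly independent linear forms) is contained in the
ideal generated by a subspace `Δ` of linear forms, then either a whole row of the block lies
in `Δ`, or there are a linear form `H ∉ Δ` and `α ≠ 0` with `L_j - α^j H ∈ Δ` for all `j`. -/
theorem scroll_block_in_linear_ideal (K : Type) [Field K] (n c : ℕ) (hc : 1 ≤ c)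
    (L : ℕ → MvPolynomial (Fin n) K)
    (hhom : ∀ j ≤ c + 1, (L j).IsHomogeneous 1)
    (hli : LinearIndependent K (fun j : Fin (c + 2) => L j))
    (M : Ideal (MvPolynomial (Fin n) K))
    (hM : M = Ideal.span {f | ∃ i j : ℕ, i < j ∧ j ≤ c ∧
        f = L i * L (j + 1) - L (i + 1) * L j})
    (Δ : Submodule K (MvPolynomial (Fin n) K))
    (hΔ : ∀ f ∈ Δ, f.IsHomogeneous 1)
    (hMΔ : M ≤ Ideal.span (Δ : Set (MvPolynomial (Fin n) K))) :
    ((∀ j ≤ c, L j ∈ Δ) ∨ (∀ j, 1 ≤ j → j ≤ c + 1 → L j ∈ Δ)) ∨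
    (∃ H : MvPolynomial (Fin n) K, H.IsHomogeneous 1 ∧ H ∉ Δ ∧
      ∃ α : K, α ≠ 0 ∧ ∀ j ≤ c + 1, L j - α ^ j • H ∈ Δ) := by
  classical
  obtain ⟨U, hU⟩ := Submodule.exists_isCompl Δ
  set q : MvPolynomial (Fin n) K →ₗ[K] MvPolynomial (Fin n) K :=
    U.subtype ∘ₗ Submodule.linearProjOfIsCompl U Δ hU.symm with hq
  have hqU : ∀ u ∈ U, q u = u := by
    intro u hu
    have h1 : Submodule.linearProjOfIsCompl U Δ hU.symm u = ⟨u, hu⟩ :=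
      Submodule.linearProjOfIsCompl_apply_left hU.symm ⟨u, hu⟩
    rw [hq]
    simp [h1]
  have hqΔ : ∀ d ∈ Δ, q d = 0 := by
    intro d hd
    have h1 : Submodule.linearProjOfIsCompl U Δ hU.symm d = 0 :=
      Submodule.linearProjOfIsCompl_apply_right' hU.symm hd
    rw [hq]
    simp [h1]
  have hsub : ∀ f : MvPolynomial (Fin n) K, f - q f ∈ Δ := by
    intro f
    obtain ⟨d, hd, u, hu, hdu⟩ := Submodule.mem_sup.mp
      (show f ∈ Δ ⊔ U by rw [hU.sup_eq_top]; trivial)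
    have hqf : q f = u := by rw [← hdu, map_add, hqΔ d hd, hqU u hu, zero_add]
    rw [hqf, ← hdu, add_sub_cancel_right]
    exact hd
  set φ : MvPolynomial (Fin n) K →ₐ[K] MvPolynomial (Fin n) K :=
    aeval (fun i => q (X i)) with hφ
  have hφhom1 : ∀ f : MvPolynomial (Fin n) K, f.IsHomogeneous 1 → φ f = q f := by
    intro f hf
    rw [hφ, aeval_hom1 hf]
    have : ∀ i : Fin n, coeff (Finsupp.single i 1) f • q (X i)
        = q (coeff (Finsupp.single i 1) f • X i) := fun i => (map_smul q _ _).symm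
    rw [Finset.sum_congr rfl (fun i _ => this i), ← map_sum]
    congr 1
    exact (eq_sum_single hf).symm
  have hφΔ : ∀ d ∈ Δ, φ d = 0 := fun d hd => by
    rw [hφhom1 d (hΔ d hd)]; exact hqΔ d hd
  have hker : ∀ f ∈ M, φ f = 0 := by
    intro f hf
    have h1 : f ∈ Ideal.span (Δ : Set (MvPolynomial (Fin n) K)) := hMΔ hf
    have h2 : Ideal.span (Δ : Set (MvPolynomial (Fin n) K)) ≤ RingHom.ker φ.toRingHom :=
      Ideal.span_le.mpr (fun d hd => hφΔ d hd)
    exact h2 h1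
  have hmem : ∀ f : MvPolynomial (Fin n) K, f.IsHomogeneous 1 → φ f = 0 → f ∈ Δ := by
    intro f hf h0
    have := hsub f
    rwa [← hφhom1 f hf, h0, sub_zero] at this
  set l : ℕ → MvPolynomial (Fin n) K := fun j => φ (L j) with hl
  have hlhom : ∀ j, j ≤ c + 1 → (l j).IsHomogeneous 1 := by
    intro j hj
    have h1 : l j = L j - (L j - q (L j)) := by
      rw [hl]; simp only [hφhom1 _ (hhom j hj)]; ring
    rw [h1]
    exact (hhom j hj).sub (hΔ _ (hsub (L j)))
  have hrel : ∀ i j : ℕ, i < j → j ≤ c → l i * l (j+1) = l (i+1) * l j := by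
    intro i j hij hjc
    have hm : L i * L (j+1) - L (i+1) * L j ∈ M := by
      rw [hM]; exact Ideal.subset_span ⟨i, j, hij, hjc, rfl⟩
    have h1 := hker _ hm
    rw [map_sub, map_mul, map_mul, sub_eq_zero] at h1
    exact h1
  by_cases h0 : l 0 = 0
  · left; left
    have key : ∀ j, j ≤ c → l j = 0 := by
      intro j
      induction j with
      | zero => intro _; exact h0
      | succ k ih =>
        intro hk
        have hr := hrel k (k+1) (Nat.lt_succ_self k) hk
        rw [ih (by omega), zero_mul] at hr
        exact mul_self_eq_zero.mp hr.symm
    intro j hj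
    exact hmem _ (hhom j (by omega)) (key j hj)
  by_cases hc1 : l (c+1) = 0
  · left; right
    have down : ∀ j, 1 ≤ j → j ≤ c → l (j+1) = 0 → l j = 0 := by
      intro j h1 h2 h3
      have hr := hrel (j-1) j (by omega) h2
      rw [show j - 1 + 1 = j by omega, h3, mul_zero] at hr
      exact mul_self_eq_zero.mp hr.symm
    have key : ∀ k, k ≤ c → l (c+1-k) = 0 := by
      intro k
      induction k with
      | zero => intro _; simpa using hc1
      | succ m ih =>
        intro hm
        have h1 : l (c+1-m) = 0 := ih (by omega)
        have h2 : c+1-(m+1) + 1 = c+1-m := by omega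
        exact down _ (by omega) (by omega) (by rw [h2]; exact h1)
    intro j hj1 hj2
    have h1 := key (c+1-j) (by omega)
    rw [show c+1-(c+1-j) = j by omega] at h1
    exact hmem _ (hhom j hj2) h1
  · right
    have hall : ∀ j, j ≤ c+1 → l j ≠ 0 := by
      intro j hj hlj
      rcases Nat.eq_zero_or_pos j with rfl | hj1
      · exact h0 hlj
      rcases eq_or_ne j (c+1) with rfl | hjne
      · exact hc1 hlj
      apply hc1
      have up : ∀ m, j ≤ m → m ≤ c+1 → l m = 0 := by
        intro m
        induction m with
        | zero => intro hm _; omega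
        | succ k ih =>
          intro hjk hkc
          by_cases hjk' : j ≤ k
          · have hk0 : l k = 0 := ih hjk' (by omega)
            have hr := hrel 0 k (by omega) (by omega)
            rw [hk0, mul_zero] at hr
            exact (mul_eq_zero.mp hr).resolve_left h0
          · have : j = k+1 := by omega
            rw [← this]; exact hlj
      exact up (c+1) (by omega) le_rfl
    have hrel01 := hrel 0 1 Nat.one_pos hc
    obtain ⟨i₀, e, heX, hesym⟩ := exists_algEquiv (l 0) (hlhom 0 (by omega)) h0
    have heX' : e.symm (l 0) = X i₀ := by rw [← heX, AlgEquiv.symm_apply_apply]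
    have hXdvd : e.symm (l 1) * e.symm (l 1) = X i₀ * e.symm (l 2) := by
      have h1 := congrArg e.symm hrel01
      rw [map_mul, map_mul, heX'] at h1
      exact h1.symm
    have hm1hom : (e.symm (l 1)).IsHomogeneous 1 := hesym _ (hlhom 1 (by omega))
    have hprime : Prime (X i₀ : MvPolynomial (Fin n) K) := prime_X_mv i₀
    have hdvd : (X i₀ : MvPolynomial (Fin n) K) ∣ e.symm (l 1) := by
      have h1 : (X i₀ : MvPolynomial (Fin n) K) ∣ e.symm (l 1) * e.symm (l 1) :=
        ⟨e.symm (l 2), hXdvd⟩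
      exact (hprime.2.2 _ _ h1).elim id id
    obtain ⟨g, hg⟩ := hdvd
    have hm1 : e.symm (l 1) = coeff 0 g • X i₀ := eq_smul_X_of i₀ hm1hom hg
    set α : K := coeff 0 g with hα'
    have hα : l 1 = α • l 0 := by
      have h1 := congrArg e hm1
      rwa [AlgEquiv.apply_symm_apply, map_smul, heX] at h1
    have hαne : α ≠ 0 := by
      intro h
      exact hall 1 (by omega) (by rw [hα, h, zero_smul])
    have hstep : ∀ j, 1 ≤ j → j ≤ c → l (j+1) = α • l j := by
      intro j h1 h2
      have hr := hrel 0 j h1 h2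
      rw [hα, smul_mul_assoc, ← mul_smul_comm] at hr
      exact mul_left_cancel₀ h0 hr
    have hpow : ∀ j, j ≤ c+1 → l j = α ^ j • l 0 := by
      intro j
      induction j with
      | zero => intro _; simp
      | succ k ih =>
        intro hk
        rcases Nat.eq_zero_or_pos k with rfl | hk1
        · simpa using hα
        · rw [hstep k hk1 (by omega), ih (by omega), smul_smul, ← pow_succ']
    refine ⟨L 0, hhom 0 (by omega), ?_, α, hαne, ?_⟩
    · intro hL0
      exact h0 (hφΔ _ hL0)
    · intro j hj
      apply hmem
      · exact (hhom j hj).sub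
          ((homogeneousSubmodule (Fin n) K 1).smul_mem _ (hhom 0 (by omega)))
      · rw [map_sub, map_smul]
        show l j - α ^ j • l 0 = 0
        rw [hpow j hj, sub_self]
end

section
/- Let K be a field, r ≥ 2, and let L_{i,0}, L_{i,1} (i = 1,…,r) be 2r linearly independent linear forms in a polynomial ring S = K[x_1,…,x_n]. Let M be the ideal generated by the 2×2 minors L_{i,0} L_{j,1} − L_{i,1} L_{j,0} (1 ≤ i < j ≤ r) of the generic 2×r matrix with rows (L_{1,0},…,L_{r,0}) and (L_{1,1},…,L_{r,1}). Let Δ be a K-subspace of the space of linear forms, and suppose M ⊆ (Δ). Then at least one of the following holds: (1) L_{i,0} ∈ Δ for all i = 1,…,r, or L_{i,1} ∈ Δ for all i = 1,…,r (all entries of one row lie in Δ); (2) there exists an index i with both L_{i,0} ∈ Δ and L_{i,1} ∈ Δ (a whole column lies in Δ); (3) there exist a nonzero constant α ∈ K and, for each i = 1,…,r, a linear form H_i ∉ Δ such that L_{i,0} − H_i ∈ Δ and L_{i,1} − α H_i ∈ Δ; (4) there exist linear forms H_1, H_2 ∉ Δ and, for each i = 1,…,r, a nonzero constant α_i ∈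 K such that L_{i,0} − α_i H_1 ∈ Δ and L_{i,1} − α_i H_2 ∈ Δ. -/
open MvPolynomial

namespace GML
variable {K : Type} [Field K] {n : ℕ}

noncomputable def lf (v : Fin n → K) : MvPolynomial (Fin n) K := ∑ i, C (v i) * X i

lemma lf_isHomogeneous (v : Fin n → K) : (lf v).IsHomogeneous 1 :=
  IsHomogeneous.sum _ _ _ (fun i _ => (isHomogeneous_X K i).C_mul (v i))

lemma coeff_lf (v : Fin n → K) (i : Fin n) :
    coeff (Finsupp.single i 1) (lf v) = v i := by
  rw [lf, coeff_sum]
  rw [Finset.sum_eq_single i]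
  · simp [coeff_C_mul, coeff_X]
  · intro j _ hj
    rw [coeff_C_mul, coeff_X', if_neg, mul_zero]
    simp [Finsupp.single_eq_single_iff, hj]
  · simp

lemma lf_add (v w : Fin n → K) : lf (v + w) = lf v + lf w := by
  simp [lf, add_mul, Finset.sum_add_distrib]

lemma lf_smul (c : K) (v : Fin n → K) : lf (c • v) = c • lf v := by
  simp [lf, Finset.smul_sum, smul_eq_C_mul, mul_assoc]

lemma lf_single (i : Fin n) (c : K) : lf (Pi.single i c) = C c * X i := by
  rw [lf, Finset.sum_eq_single i]
  · simp
  · intro j _ hj; simp [Pi.single_eq_of_ne hj]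
  · simp

/-- a monomial of degree 1 is `single i 1` -/
lemma degree_one_single {m : Fin n →₀ ℕ} (hm : m.degree = 1) :
    ∃ i, m = Finsupp.single i 1 := by
  have h0 : m ≠ 0 := by rintro rfl; simp [map_zero] at hm
  obtain ⟨i, hi⟩ := Finsupp.ne_iff.mp h0
  simp only [Finsupp.coe_zero, Pi.zero_apply] at hi
  have hisup : i ∈ m.support := Finsupp.mem_support_iff.mpr hi
  have hdeg : m.degree = m i + ∑ j ∈ m.support.erase i, m j := by
    rw [Finsupp.degree_apply, Finset.add_sum_erase _ _ hisup]
  refine ⟨i, Finsupp.eq_single_iff.mpr ⟨?_, ?_⟩⟩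
  · intro j hj
    by_contra hji
    simp only [Finset.mem_singleton] at hji
    have hjsup : j ∈ m.support.erase i := Finset.mem_erase.mpr ⟨hji, hj⟩
    have : 1 ≤ m i := Nat.one_le_iff_ne_zero.mpr hi
    have : 1 ≤ m j := Nat.one_le_iff_ne_zero.mpr (Finsupp.mem_support_iff.mp hj)
    have : m j ≤ ∑ k ∈ m.support.erase i, m k := Finset.single_le_sum (fun _ _ => Nat.zero_le _) hjsup
    omega
  · have : 1 ≤ m i := Nat.one_le_iff_ne_zero.mpr hi
    omega

lemma lf_coeffs {p : MvPolynomial (Fin n) K} (hp : p.IsHomogeneous 1) :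
    lf (fun i => coeff (Finsupp.single i 1) p) = p := by
  ext m
  by_cases hm : m.degree = 1
  · obtain ⟨i, rfl⟩ := degree_one_single hm
    rw [coeff_lf]
  · rw [hp.coeff_eq_zero hm, ((lf_isHomogeneous _)).coeff_eq_zero hm]

lemma lf_injective : Function.Injective (lf : (Fin n → K) → MvPolynomial (Fin n) K) := by
  intro v w h
  funext i
  rw [← coeff_lf v i, ← coeff_lf w i, h]

lemma lf_sub (v w : Fin n → K) : lf (v - w) = lf v - lf w := by
  simp [lf, sub_mul, Finset.sum_sub_distrib]

lemma lf_zero : lf (0 : Fin n → K) = 0 := by simp [lf]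

lemma lf_eq_zero_iff {v : Fin n → K} : lf v = 0 ↔ v = 0 := by
  constructor
  · intro h; apply lf_injective; rw [h, lf_zero]
  · rintro rfl; exact lf_zero


lemma sum_pi_single' (v : Fin n → K) : ∑ i, Pi.single i (v i) = v := by
  ext j
  rw [Finset.sum_apply]
  rw [Finset.sum_eq_single j]
  · simp
  · intro i _ hij; exact Pi.single_eq_of_ne (Ne.symm hij) _
  · simp

noncomputable def subst (T : (Fin n → K) →ₗ[K] (Fin n → K)) :
    MvPolynomial (Fin n) K →ₐ[K] MvPolynomial (Fin n) K :=
  aeval (fun i => lf (T (Pi.single i 1)))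

lemma subst_X (T : (Fin n → K) →ₗ[K] (Fin n → K)) (i : Fin n) :
    subst T (X i) = lf (T (Pi.single i 1)) := aeval_X _ _

lemma subst_lf (T : (Fin n → K) →ₗ[K] (Fin n → K)) (v : Fin n → K) :
    subst T (lf v) = lf (T v) := by
  rw [lf, map_sum]
  have key : ∀ i : Fin n, subst T (C (v i) * X i) = lf (T (Pi.single i (v i))) := by
    intro i
    have : Pi.single i (v i) = v i • (Pi.single i (1 : K) : Fin n → K) := by
      rw [← Pi.single_smul, smul_eq_mul, mul_one]
    rw [map_mul, subst, aeval_X, aeval_C, this, map_smul, lf_smul, algebraMap_eq,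
      smul_eq_C_mul]
  rw [Finset.sum_congr rfl (fun i _ => key i)]
  have : ∑ i : Fin n, lf (T (Pi.single i (v i))) = lf (T (∑ i : Fin n, Pi.single i (v i))) := by
    rw [map_sum]
    induction (Finset.univ : Finset (Fin n)) using Finset.induction with
    | empty => simp [lf_zero]
    | insert _ _ h ih => rw [Finset.sum_insert h, Finset.sum_insert h, lf_add, ih]
  rw [this, sum_pi_single']

lemma prime_equiv_aux {R S : Type*} [CommMonoidWithZero R] [CommMonoidWithZero S]
    (e : R ≃* S) {p : R} (h : Prime p) : Prime (e p) := (MulEquiv.prime_iff e).mpr h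

lemma prime_X (i : Fin n) : Prime (X i : MvPolynomial (Fin n) K) := by
  cases n with
  | zero => exact i.elim0
  | succ m =>
    let e1 := renameEquiv K (Equiv.swap i 0)
    have h1 : e1.symm (X 0) = X i := by
      simp only [e1, renameEquiv_symm, renameEquiv_apply, rename_X]
      rw [Equiv.symm_swap, Equiv.swap_apply_right]
    have h2 : (MvPolynomial.finSuccEquiv K m).symm Polynomial.X = X 0 := by
      rw [AlgEquiv.symm_apply_eq, finSuccEquiv_X_zero]
    have hp : Prime ((MvPolynomial.finSuccEquiv K m).symm Polynomial.X) :=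
      prime_equiv_aux (MvPolynomial.finSuccEquiv K m).symm.toMulEquiv Polynomial.prime_X
    rw [h2] at hp
    have := prime_equiv_aux e1.symm.toMulEquiv hp
    rwa [show e1.symm.toMulEquiv (X 0) = X i from h1] at this

lemma prime_lf {v : Fin n → K} (hv : v ≠ 0) : Prime (lf v) := by
  obtain ⟨k, hk⟩ : ∃ k, v k ≠ 0 := by
    by_contra h
    push_neg at h
    exact hv (funext h)
  set w : Fin n → K := v - Pi.single k 1 with hw
  set T : (Fin n → K) →ₗ[K] (Fin n → K) :=
    LinearMap.id + (LinearMap.proj k).smulRight w with hT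
  set S : (Fin n → K) →ₗ[K] (Fin n → K) :=
    LinearMap.id - (v k)⁻¹ • (LinearMap.proj k).smulRight w with hS
  have hTapp : ∀ x, T x = x + x k • w := by intro x; simp [hT]
  have hSapp : ∀ x, S x = x - ((v k)⁻¹ * x k) • w := by
    intro x; simp [hS, mul_smul]
  have hwk : w k = v k - 1 := by simp [hw]
  have hTS : ∀ x, T (S x) = x := by
    intro x
    rw [hSapp, hTapp]
    have hk' : (x - ((v k)⁻¹ * x k) • w) k = (v k)⁻¹ * x k := by
      simp only [Pi.sub_apply, Pi.smul_apply, smul_eq_mul, hwk]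
      field_simp
      ring
    rw [hk']
    ext j
    simp only [Pi.add_apply, Pi.sub_apply, Pi.smul_apply, smul_eq_mul]
    ring
  have hST : ∀ x, S (T x) = x := by
    intro x
    rw [hTapp, hSapp]
    have hk' : (x + x k • w) k = x k * v k := by
      simp only [Pi.add_apply, Pi.smul_apply, smul_eq_mul, hwk]; ring
    rw [hk']
    ext j
    simp only [Pi.add_apply, Pi.sub_apply, Pi.smul_apply, smul_eq_mul]
    field_simp
    ring
  have hid : ∀ (U V : (Fin n → K) →ₗ[K] (Fin n → K)), (∀ x, U (V x) = x) →
      (subst U).comp (subst V) = AlgHom.id K (MvPolynomial (Fin n) K) := by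
    intro U V h
    apply MvPolynomial.algHom_ext
    intro i
    rw [AlgHom.comp_apply, subst_X, subst_lf, h, AlgHom.id_apply, lf_single, C_1, one_mul]
  let Ψ : MvPolynomial (Fin n) K ≃ₐ[K] MvPolynomial (Fin n) K :=
    AlgEquiv.ofAlgHom (subst T) (subst S) (hid T S hTS) (hid S T hST)
  have hΨ : Ψ (X k) = lf v := by
    show subst T (X k) = lf v
    rw [subst_X]
    congr 1
    have : T (Pi.single k 1) = v := by
      rw [hTapp]
      ext j
      simp only [Pi.add_apply, Pi.smul_apply, smul_eq_mul, hw, Pi.sub_apply]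
      rcases eq_or_ne k j with rfl | hkj
      · simp
      · simp [Pi.single_eq_of_ne (Ne.symm hkj)]
    rw [this]
  rw [← hΨ]
  exact prime_equiv_aux Ψ.toMulEquiv (prime_X k)

lemma exists_proj (D : Submodule K (Fin n → K)) :
    ∃ π : (Fin n → K) →ₗ[K] (Fin n → K),
      (∀ v, π v = 0 ↔ v ∈ D) ∧ (∀ v, π (π v) = π v) := by
  obtain ⟨W, hW⟩ := D.exists_isCompl
  refine ⟨W.subtype.comp (Submodule.projectionOnto W D hW.symm), fun v => ?_, fun v => ?_⟩
  · simp only [LinearMap.comp_apply, Submodule.coe_subtype, ZeroMemClass.coe_eq_zero]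
    exact Submodule.linearProjOfIsCompl_apply_eq_zero_iff hW.symm
  · simp only [LinearMap.comp_apply, Submodule.coe_subtype]
    rw [Submodule.linearProjOfIsCompl_apply_left hW.symm]

section Phi
variable {Δ : Submodule K (MvPolynomial (Fin n) K)} (hΔ : ∀ f ∈ Δ, f.IsHomogeneous 1)
variable {π : (Fin n → K) →ₗ[K] (Fin n → K)}
variable (hker : ∀ v, π v = 0 ↔ lf v ∈ Δ) (hproj : ∀ v, π (π v) = π v)

include hΔ hker in
lemma phi_of_mem {g : MvPolynomial (Fin n) K} (hg : g ∈ Δ) : subst π g = 0 := by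
  have h1 : g = lf (fun i => coeff (Finsupp.single i 1) g) := (lf_coeffs (hΔ g hg)).symm
  rw [h1, subst_lf, lf_eq_zero_iff, hker, ← h1]
  exact hg

include hker hproj in
lemma phi_sub_mem (f : MvPolynomial (Fin n) K) : f - subst π f ∈ Ideal.span (Δ : Set _) := by
  induction f using MvPolynomial.induction_on with
  | C a => rw [show subst π (C a) = C a from aeval_C _ a]; simp
  | add p q hp hq =>
    rw [map_add]
    have : p + q - (subst π p + subst π q) = (p - subst π p) + (q - subst π q) := by ring
    rw [this]
    exact Ideal.add_mem _ hp hq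
  | mul_X p i hp =>
    have hXi : X i - subst π (X i) ∈ Ideal.span (Δ : Set _) := by
      rw [subst_X, show (X i : MvPolynomial (Fin n) K) = lf (Pi.single i 1) by
        rw [lf_single, C_1, one_mul], ← lf_sub]
      have hmem : lf (Pi.single i (1:K) - π (Pi.single i 1)) ∈ Δ := by
        rw [← hker, map_sub, hproj, sub_self]
      exact Ideal.subset_span hmem
    have : p * X i - subst π (p * X i) = p * (X i - subst π (X i)) + (p - subst π p) * subst π (X i) := by
      rw [map_mul]; ring
    rw [this]
    exact Ideal.add_mem _ (Ideal.mul_mem_left _ _ hXi) (Ideal.mul_mem_right _ _ hp)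

include hΔ hker hproj in
lemma phi_mem_span_iff (f : MvPolynomial (Fin n) K) :
    f ∈ Ideal.span (Δ : Set _) ↔ subst π f = 0 := by
  constructor
  · intro hf
    have hsub : Ideal.span (Δ : Set _) ≤ RingHom.ker (subst π : MvPolynomial (Fin n) K →+* MvPolynomial (Fin n) K) := by
      rw [Ideal.span_le]
      intro g hg
      exact phi_of_mem hΔ hker hg
    exact hsub hf
  · intro hf
    have := phi_sub_mem hker hproj f
    rwa [hf, sub_zero] at this

include hΔ hker in
lemma phi_linear_mem_iff {L : MvPolynomial (Fin n) K} (hL : L.IsHomogeneous 1) :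
    subst π L = 0 ↔ L ∈ Δ := by
  constructor
  · intro h
    have h1 : L = lf (fun i => coeff (Finsupp.single i 1) L) := (lf_coeffs hL).symm
    rw [h1, subst_lf, lf_eq_zero_iff, hker, ← h1] at h
    exact h
  · exact phi_of_mem hΔ hker

lemma phi_isHomogeneous {L : MvPolynomial (Fin n) K} (hL : L.IsHomogeneous 1) :
    (subst π L).IsHomogeneous 1 := by
  rw [← lf_coeffs hL, subst_lf]
  exact lf_isHomogeneous _

include hker hproj in
lemma phi_sub_mem_delta {L : MvPolynomial (Fin n) K} (hL : L.IsHomogeneous 1) :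
    L - subst π L ∈ Δ := by
  rw [← lf_coeffs hL, subst_lf, ← lf_sub, ← hker, map_sub, hproj, sub_self]

include hproj in
lemma phi_idem (f : MvPolynomial (Fin n) K) : subst π (subst π f) = subst π f := by
  have : (subst π).comp (subst π) = subst π := by
    apply MvPolynomial.algHom_ext
    intro i
    rw [AlgHom.comp_apply, subst_X, subst_lf, hproj]
  calc subst π (subst π f) = ((subst π).comp (subst π)) f := rfl
  _ = subst π f := by rw [this]

end Phi

lemma coeff_single_lf_mul (u : Fin n → K) (g : MvPolynomial (Fin n) K) (i : Fin n) :
    coeff (Finsupp.single i 1) (lf u * g) = u i * coeff 0 g := by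
  classical
  rw [lf, Finset.sum_mul, coeff_sum]
  rw [Finset.sum_eq_single i]
  · rw [mul_assoc, coeff_C_mul, mul_comm (X i) g, coeff_mul_X']
    simp
  · intro j _ hj
    rw [mul_assoc, coeff_C_mul, mul_comm (X j) g, coeff_mul_X']
    have hns : j ∉ (Finsupp.single i (1:ℕ)).support := by
      simp [Finsupp.support_single_ne_zero i (one_ne_zero : (1:ℕ) ≠ 0), hj]
    rw [if_neg hns, mul_zero]
  · simp

/-- if a linear form divides another (nonzero quotient situation), the quotient is a constant -/
lemma exists_C_of_lf_mul {u : Fin n → K} (hu : u ≠ 0) {f q : MvPolynomial (Fin n) K}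
    (hq : q.IsHomogeneous 1) (h : q = lf u * f) : ∃ c : K, f = C c := by
  refine ⟨coeff 0 f, ?_⟩
  set g := f - C (coeff 0 f) with hg
  have hg0 : coeff 0 g = 0 := by simp [hg]
  have hfact : q - lf (coeff 0 f • u) = lf u * g := by
    rw [lf_smul, smul_eq_C_mul, hg, h]
    ring
  have hhom1 : (lf u * g).IsHomogeneous 1 := by
    rw [← hfact]
    exact hq.sub (lf_isHomogeneous _)
  have hcoeffs : ∀ i, coeff (Finsupp.single i 1) (lf u * g) = 0 := by
    intro i
    rw [coeff_single_lf_mul, hg0, mul_zero]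
  have : lf u * g = lf (fun i => coeff (Finsupp.single i 1) (lf u * g)) := (lf_coeffs hhom1).symm
  rw [show (fun i => coeff (Finsupp.single i 1) (lf u * g)) = (0 : Fin n → K) from funext hcoeffs,
    lf_zero] at this
  have hz : g = 0 := by
    rcases mul_eq_zero.mp this with h' | h'
    · exact absurd h' (fun hh => hu (lf_eq_zero_iff.mp hh))
    · exact h'
  rw [hg, sub_eq_zero] at hz
  exact hz

end GML

open GML

/-- **Lemma 2.3.** If the ideal of `2×2` minors of a generic `2×r` matrix of linearly
independent linear forms (rows `(L_{1,0},…,L_{r,0})` and `(L_{1,1},…,L_{r,1})`) is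
contained in the ideal generated by a subspace `Δ` of linear forms, then a whole row lies
in `Δ`, or a whole column lies in `Δ`, or one of two rank-one deformation cases holds. -/
theorem generic_matrix_in_linear_ideal (K : Type) [Field K] (n r : ℕ) (hr : 2 ≤ r)
    (A B : Fin r → MvPolynomial (Fin n) K)
    (hhom : ∀ i, (A i).IsHomogeneous 1 ∧ (B i).IsHomogeneous 1)
    (hli : LinearIndependent K (Sum.elim A B : Fin r ⊕ Fin r → MvPolynomial (Fin n) K))
    (M : Ideal (MvPolynomial (Fin n) K))
    (hM : M = Ideal.span {f | ∃ i j : Fin r, i < j ∧ f = A i * B j - A j * B i})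
    (Δ : Submodule K (MvPolynomial (Fin n) K))
    (hΔ : ∀ f ∈ Δ, f.IsHomogeneous 1)
    (hMΔ : M ≤ Ideal.span (Δ : Set (MvPolynomial (Fin n) K))) :
    ((∀ i, A i ∈ Δ) ∨ (∀ i, B i ∈ Δ)) ∨
    (∃ i, A i ∈ Δ ∧ B i ∈ Δ) ∨
    (∃ α : K, α ≠ 0 ∧ ∀ i, ∃ H : MvPolynomial (Fin n) K, H.IsHomogeneous 1 ∧ H ∉ Δ ∧
      A i - H ∈ Δ ∧ B i - α • H ∈ Δ) ∨
    (∃ H₁ H₂ : MvPolynomial (Fin n) K, H₁.IsHomogeneous 1 ∧ H₂.IsHomogeneous 1 ∧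
      H₁ ∉ Δ ∧ H₂ ∉ Δ ∧ ∀ i, ∃ α : K, α ≠ 0 ∧
        A i - α • H₁ ∈ Δ ∧ B i - α • H₂ ∈ Δ) := by
  classical
  -- set up the projection
  obtain ⟨π, hker', hproj⟩ := exists_proj (K := K) (n := n)
    (Submodule.comap ({ toFun := lf, map_add' := lf_add, map_smul' := lf_smul } :
      (Fin n → K) →ₗ[K] MvPolynomial (Fin n) K) Δ)
  have hker : ∀ v, π v = 0 ↔ lf v ∈ Δ := fun v => (hker' v).trans Submodule.mem_comap
  set a : Fin r → MvPolynomial (Fin n) K := fun i => subst π (A i) with ha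
  set b : Fin r → MvPolynomial (Fin n) K := fun i => subst π (B i) with hb
  have memA : ∀ i, A i ∈ Δ ↔ a i = 0 :=
    fun i => ((phi_linear_mem_iff hΔ hker (hhom i).1)).symm
  have memB : ∀ i, B i ∈ Δ ↔ b i = 0 :=
    fun i => ((phi_linear_mem_iff hΔ hker (hhom i).2)).symm
  have minor : ∀ i j : Fin r, a i * b j = a j * b i := by
    have key : ∀ i j : Fin r, i < j → a i * b j = a j * b i := by
      intro i j hij
      have h1 : A i * B j - A j * B i ∈ M := by
        rw [hM]; exact Ideal.subset_span ⟨i, j, hij, rfl⟩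
      have h2 := (phi_mem_span_iff hΔ hker hproj _).mp (hMΔ h1)
      rw [map_sub, map_mul, map_mul, sub_eq_zero] at h2
      exact h2
    intro i j
    rcases lt_trichotomy i j with h | h | h
    · exact key i j h
    · rw [h]
    · rw [mul_comm, key j i h, mul_comm]
  -- basic facts about Φ images
  have hahom : ∀ i, (a i).IsHomogeneous 1 := fun i => phi_isHomogeneous (hhom i).1
  have hbhom : ∀ i, (b i).IsHomogeneous 1 := fun i => phi_isHomogeneous (hhom i).2
  have hnotmem : ∀ p : MvPolynomial (Fin n) K, subst π p ≠ 0 → subst π p ∉ Δ := by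
    intro p hp hmem
    exact hp (by rw [← phi_idem hproj p]; exact phi_of_mem hΔ hker hmem)
  have hsubA : ∀ i, A i - a i ∈ Δ := fun i => phi_sub_mem_delta hker hproj (hhom i).1
  have hsubB : ∀ i, B i - b i ∈ Δ := fun i => phi_sub_mem_delta hker hproj (hhom i).2
  by_cases hA : ∀ i, a i = 0
  · exact Or.inl (Or.inl (fun i => (memA i).mpr (hA i)))
  by_cases hB : ∀ i, b i = 0
  · exact Or.inl (Or.inr (fun i => (memB i).mpr (hB i)))
  push_neg at hA hB
  obtain ⟨i₀, hi₀⟩ := hA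
  obtain ⟨j₀, hj₀⟩ := hB
  by_cases hcol : ∃ k, a k = 0 ∧ b k = 0
  · obtain ⟨k, hk1, hk2⟩ := hcol
    exact Or.inr (Or.inl ⟨k, (memA k).mpr hk1, (memB k).mpr hk2⟩)
  push_neg at hcol
  have hall : ∀ k, a k ≠ 0 ∧ b k ≠ 0 := by
    intro k
    by_cases hak : a k = 0
    · have : a i₀ * b k = 0 := by rw [minor i₀ k, hak, zero_mul]
      rcases mul_eq_zero.mp this with h | h
      · exact absurd h hi₀
      · exact absurd h (hcol k hak)
    · refine ⟨hak, ?_⟩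
      intro hbk
      have : a k * b j₀ = 0 := by rw [minor k j₀, hbk, mul_zero]
      rcases mul_eq_zero.mp this with h | h
      · exact hak h
      · exact hj₀ h
  set z : Fin r := ⟨0, by omega⟩ with hz
  by_cases hprop : ∃ α : K, b z = α • a z
  · -- case 3
    obtain ⟨α, hα⟩ := hprop
    have hα0 : α ≠ 0 := by
      rintro rfl
      rw [zero_smul] at hα
      exact (hall z).2 hα
    have hbi : ∀ i, b i = α • a i := by
      intro i
      have h1 : a z * b i = a z * (α • a i) := by
        rw [minor z i, hα, mul_smul_comm, mul_smul_comm, mul_comm (a i) (a z)]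
      exact mul_left_cancel₀ (hall z).1 h1
    refine Or.inr (Or.inr (Or.inl ⟨α, hα0, fun i => ⟨a i, hahom i, ?_, hsubA i, ?_⟩⟩))
    · exact hnotmem (A i) (hall i).1
    · rw [← hbi i]; exact hsubB i
  · -- case 4
    push_neg at hprop
    -- a z is prime
    have haz_lf : a z = lf (π (fun i => coeff (Finsupp.single i 1) (A z))) := by
      have hAz : A z = lf (fun i => coeff (Finsupp.single i 1) (A z)) := (lf_coeffs (hhom z).1).symm
      show subst π (A z) = _
      conv_lhs => rw [hAz]
      rw [subst_lf]
    have haz_prime : Prime (a z) := by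
      rw [haz_lf]
      apply prime_lf
      intro hzero
      apply (hall z).1
      rw [haz_lf, hzero, lf_zero]
    have key4 : ∀ i, ∃ α : K, α ≠ 0 ∧ a i = α • a z ∧ b i = α • b z := by
      intro i
      have hdvd : a z ∣ a i * b z := ⟨b i, (minor i z).symm ▸ (minor z i).symm⟩
      rcases haz_prime.2.2 _ _ hdvd with h | h
      · obtain ⟨f, hf⟩ := h
        obtain ⟨c, rfl⟩ := exists_C_of_lf_mul (u := π (fun k => coeff (Finsupp.single k 1) (A z)))
          (by intro hzero; apply (hall z).1; rw [haz_lf, hzero, lf_zero])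
          (hahom i) (by rw [hf, haz_lf])
        have hc0 : c ≠ 0 := by
          rintro rfl
          rw [C_0, mul_zero] at hf
          exact (hall i).1 hf
        refine ⟨c, hc0, by rw [hf, mul_comm, ← smul_eq_C_mul], ?_⟩
        have h1 : a z * b i = a z * (c • b z) := by
          rw [minor z i, hf, mul_assoc, ← smul_eq_C_mul]
        exact mul_left_cancel₀ (hall z).1 h1
      · obtain ⟨f, hf⟩ := h
        obtain ⟨c, rfl⟩ := exists_C_of_lf_mul (u := π (fun k => coeff (Finsupp.single k 1) (A z)))
          (by intro hzero; apply (hall z).1; rw [haz_lf, hzero, lf_zero])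
          (hbhom z) (by rw [hf, haz_lf])
        exact absurd (by rw [hf, mul_comm, ← smul_eq_C_mul]) (hprop c)
    refine Or.inr (Or.inr (Or.inr ⟨a z, b z, hahom z, hbhom z,
      hnotmem (A z) (hall z).1, hnotmem (B z) (hall z).2, fun i => ?_⟩))
    obtain ⟨α, hα0, hai, hbi⟩ := key4 i
    exact ⟨α, hα0, by rw [← hai]; exact hsubA i, by rw [← hbi]; exact hsubB i⟩
end

section
/- Let K be a field and let B be a scroll matrix over a polynomial ring S = K[x_1,…,x_n]: B is a 2×N matrix of linear forms consisting of blocks B_1,…,B_r, where block B_i has rows (L_{i,0},…,L_{i,c_i}) and (L_{i,1},…,L_{i,c_i+1}), and all the linear forms L_{i,0},…,L_{i,c_i+1} (over all i = 1,…,r) are linearly independent; the block B_i is called generic if c_i = 0 and non-generic if c_i > 0. Let M be the ideal generated by all 2×2 minors of B, let Δ be a K-subspace of the space of linear forms, and suppose M ⊆ (Δ). Then at least one of the following holds: (1) all blocks of B are generic; (2) all entries of one of the two rows of B lie in Δ; (3) there exists a non-generic block B_i all of whose entries lie in Δ; (4) B has a non-generic block, no entry of any non-generic block of B lies in Δ,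 and there exists a nonzero constant α ∈ K such that for every non-generic block B_i there is a linear form H_i ∉ Δ with L_{i,j} − α^j H_i ∈ Δ for all j = 0,…,c_i+1, and for every generic block B_i there is a linear form H_i, either zero or not in Δ, with L_{i,0} − H_i ∈ Δ and L_{i,1} − α H_i ∈ Δ. -/
open MvPolynomial

section Aux

variable {K : Type} [Field K] {n : ℕ}

private lemma degree_one_shape {d : Fin n →₀ ℕ} (hd : Finsupp.degree d = 1) :
    ∃ i, d = Finsupp.single i 1 := by
  classical
  have hne : d.support.Nonempty := by
    by_contra h
    rw [Finset.not_nonempty_iff_eq_empty] at h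
    rw [Finsupp.degree_apply, h] at hd
    simp at hd
  have hle : d.support.card ≤ 1 := by
    have h1 : d.support.card • 1 ≤ ∑ i ∈ d.support, d i :=
      Finset.card_nsmul_le_sum d.support d 1
        (fun i hi => Nat.one_le_iff_ne_zero.2 (Finsupp.mem_support_iff.1 hi))
    rw [Finsupp.degree_apply] at hd
    simp only [smul_eq_mul, mul_one] at h1
    omega
  have hcard : d.support.card = 1 := le_antisymm hle (Finset.Nonempty.card_pos hne)
  obtain ⟨a, b, hb, rfl⟩ := Finsupp.card_support_eq_one'.1 hcard
  have hdeg : Finsupp.degree (Finsupp.single a b) = b := by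
    rw [Finsupp.degree_apply, Finsupp.support_single_ne_zero a hb]
    simp
  rw [hdeg] at hd
  exact ⟨a, by rw [hd]⟩

private lemma homog1_rep {p : MvPolynomial (Fin n) K} (hp : p.IsHomogeneous 1) :
    p = ∑ i : Fin n, coeff (Finsupp.single i 1) p • X i := by
  classical
  ext d
  rw [coeff_sum]
  by_cases hsh : ∃ i, d = Finsupp.single i 1
  · obtain ⟨i0, rfl⟩ := hsh
    rw [Finset.sum_eq_single i0]
    · rw [coeff_smul, coeff_X', if_pos rfl]
      simp
    · intro i _ hne
      rw [coeff_smul, coeff_X', if_neg, smul_zero]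
      intro h
      exact hne ((Finsupp.single_left_inj one_ne_zero).1 h)
    · simp
  · have h1 : coeff d p = 0 :=
      hp.coeff_eq_zero (fun hdeg => hsh (degree_one_shape hdeg))
    rw [h1]
    symm
    apply Finset.sum_eq_zero
    intro i _
    rw [coeff_smul, coeff_X', if_neg (fun h => hsh ⟨i, h.symm⟩), smul_zero]


private lemma homog1_eval {p : MvPolynomial (Fin n) K} (hp : p.IsHomogeneous 1)
    (a : Fin n → K) : eval a p = ∑ i, coeff (Finsupp.single i 1) p * a i := by
  conv_lhs => rw [homog1_rep hp]
  rw [map_sum]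
  exact Finset.sum_congr rfl fun i _ => by rw [smul_eq_C_mul, map_mul, eval_C, eval_X]

private lemma homog1_smul {p : MvPolynomial (Fin n) K} (a : K) (hp : p.IsHomogeneous 1) :
    (a • p).IsHomogeneous 1 := by
  rw [← mem_homogeneousSubmodule] at hp ⊢
  exact Submodule.smul_mem _ a hp

private lemma exists_point {u v : MvPolynomial (Fin n) K} (hu : u.IsHomogeneous 1)
    (hv : v.IsHomogeneous 1) (hind : LinearIndependent K ![u, v]) :
    ∃ a : Fin n → K, eval a u = 0 ∧ eval a v = 1 := by
  classical
  set cu : Fin n → K := fun i => coeff (Finsupp.single i 1) u with hcu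
  set cv : Fin n → K := fun i => coeff (Finsupp.single i 1) v with hcv
  have hci : LinearIndependent K ![cu, cv] := by
    rw [LinearIndependent.pair_iff]
    intro s t hst
    have h1 : (s • u + t • v).IsHomogeneous 1 := (homog1_smul s hu).add (homog1_smul t hv)
    have h0 : s • u + t • v = 0 := by
      rw [homog1_rep h1]
      apply Finset.sum_eq_zero
      intro i _
      have hc : coeff (Finsupp.single i 1) (s • u + t • v) = s * cu i + t * cv i := by
        simp [coeff_add, coeff_smul, hcu, hcv, smul_eq_mul]
      have hz : s * cu i + t * cv i = 0 := by
        have h3 := congrFun hst i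
        simpa using h3
      rw [hc, hz, zero_smul]
    exact LinearIndependent.pair_iff.1 hind s t h0
  have hne : cu ≠ cv := by
    intro h
    obtain ⟨h1, -⟩ := LinearIndependent.pair_iff.1 hci 1 (-1)
      (by rw [h]; simp)
    exact one_ne_zero h1
  have hsub := (linearIndepOn_id_range_iff hci.injective).2 hci
  let b := Module.Basis.extend hsub
  have hcumem : cu ∈ hsub.extend (Set.subset_univ _) :=
    hsub.subset_extend _ ⟨0, rfl⟩
  have hcvmem : cv ∈ hsub.extend (Set.subset_univ _) :=
    hsub.subset_extend _ ⟨1, rfl⟩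
  let ℓ : (Fin n → K) →ₗ[K] K := b.coord ⟨cv, hcvmem⟩
  have hbv : b ⟨cv, hcvmem⟩ = cv := Module.Basis.extend_apply_self hsub _
  have hbu : b ⟨cu, hcumem⟩ = cu := Module.Basis.extend_apply_self hsub _
  have hlv : ℓ cv = 1 := by
    have h1 : b.repr (b ⟨cv, hcvmem⟩) = Finsupp.single ⟨cv, hcvmem⟩ 1 := b.repr_self _
    rw [hbv] at h1
    simp [ℓ, Module.Basis.coord_apply, h1]
  have hlu : ℓ cu = 0 := by
    have hne' : (⟨cu, hcumem⟩ : hsub.extend (Set.subset_univ _)) ≠ ⟨cv, hcvmem⟩ := by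
      simpa using hne
    have h1 : b.repr (b ⟨cu, hcumem⟩) = Finsupp.single ⟨cu, hcumem⟩ 1 := b.repr_self _
    rw [hbu] at h1
    simp only [ℓ, Module.Basis.coord_apply, h1, Finsupp.single_apply]
    rw [if_neg (by simpa using hne)]
  let e : Fin n → (Fin n → K) := fun i => Pi.single i 1
  have hdot : ∀ x : Fin n → K, ∑ i, x i * ℓ (e i) = ℓ x := by
    intro x
    have h1 : ∀ i : Fin n, x i * ℓ (e i) = ℓ (Pi.single i (x i)) := by
      intro i
      have h2 : (Pi.single i (x i) : Fin n → K) = x i • e i := by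
        funext j
        by_cases hij : j = i
        · subst hij; simp [e]
        · simp [e, Pi.single_eq_of_ne hij]
      rw [h2, map_smul, smul_eq_mul]
    simp_rw [h1]
    rw [← map_sum]
    congr 1
    exact Finset.univ_sum_single x
  refine ⟨fun j => ℓ (e j), ?_, ?_⟩
  · rw [homog1_eval hu]; exact (hdot cu).trans hlu
  · rw [homog1_eval hv]; exact (hdot cv).trans hlv

private lemma ratio_of_sq {u v w : MvPolynomial (Fin n) K} (hu : u.IsHomogeneous 1)
    (hv : v.IsHomogeneous 1) (h : u * w = v * v) (hv0 : v ≠ 0) :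
    ∃ α : K, α ≠ 0 ∧ v = α • u := by
  have hdep : ¬ LinearIndependent K ![u, v] := by
    intro hind
    obtain ⟨a, ha0, ha1⟩ := exists_point hu hv hind
    have h2 := congrArg (eval a) h
    rw [map_mul, map_mul, ha0, ha1, zero_mul, one_mul] at h2
    exact one_ne_zero h2.symm
  rw [LinearIndependent.pair_iff] at hdep
  push_neg at hdep
  obtain ⟨s, t, hst, hne⟩ := hdep
  by_cases ht : t = 0
  · exfalso
    subst ht
    have hs : s ≠ 0 := fun h0 => hne h0 rfl
    have hu0 : u = 0 := by
      have h3 : s • u = 0 := by simpa using hst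
      exact (smul_eq_zero.1 h3).resolve_left hs
    rw [hu0, zero_mul] at h
    exact hv0 (mul_self_eq_zero.1 h.symm)
  · have hveq : v = -(s/t) • u := by
      have h3 : t • v = -(s • u) := by
        rw [eq_neg_iff_add_eq_zero, add_comm]
        exact hst
      calc v = t⁻¹ • (t • v) := by rw [smul_smul, inv_mul_cancel₀ ht, one_smul]
      _ = t⁻¹ • (-(s • u)) := by rw [h3]
      _ = -(s/t) • u := by rw [smul_neg, smul_smul, ← neg_smul]; ring_nf
    refine ⟨-(s/t), ?_, hveq⟩
    intro h0
    apply hv0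
    rw [hveq, h0, zero_smul]

private lemma exists_adjacent {P : ℕ → Prop} {m j0 j1 : ℕ} (h0 : j0 ≤ m + 1) (h1 : j1 ≤ m + 1)
    (hP : P j0) (hnP : ¬ P j1) :
    ∃ k ≤ m, (P k ∧ ¬ P (k+1)) ∨ (¬ P k ∧ P (k+1)) := by
  by_contra hcon
  push_neg at hcon
  have step : ∀ k, k ≤ m → (P k ↔ P (k+1)) := by
    intro k hk
    obtain ⟨hA, hB⟩ := hcon k hk
    constructor
    · exact hA
    · intro h
      by_contra h'
      exact hB h' h
  have all : ∀ j, j ≤ m + 1 → (P j ↔ P 0) := by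
    intro j
    induction j with
    | zero => simp
    | succ k ih =>
      intro hk
      rw [← step k (by omega)]
      exact ih (by omega)
  exact hnP ((all j1 h1).2 ((all j0 h0).1 hP))


end Aux

/-- **Proposition 2.4.** Let `B` be a scroll matrix made of blocks `B_1,…,B_r`, where block
`B_i` has rows `(L_{i,0},…,L_{i,c_i})` and `(L_{i,1},…,L_{i,c_i+1})`, all entries being
linearly independent linear forms (`B_i` is generic iff `c_i = 0`). If the ideal `M` of all
`2×2` minors of `B` is contained in the ideal generated by a subspace `Δ` of linear forms,
then: all blocks are generic; or a whole row of `B` lies in `Δ`; or some non-generic block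
lies entirely in `Δ`; or no entry of a non-generic block lies in `Δ` and there is a single
`α ≠ 0` realizing a rank-one deformation on every block. -/
theorem scroll_matrix_in_linear_ideal (K : Type) [Field K] (n r : ℕ) (hr : 1 ≤ r)
    (c : ℕ → ℕ) (L : ℕ → ℕ → MvPolynomial (Fin n) K)
    (hhom : ∀ i < r, ∀ j ≤ c i + 1, (L i j).IsHomogeneous 1)
    (hli : LinearIndependent K
      (fun p : Σ i : Fin r, Fin (c i.val + 2) => L p.1.val p.2.val))
    (M : Ideal (MvPolynomial (Fin n) K))
    (hM : M = Ideal.span {f | ∃ i i' j j' : ℕ, i < r ∧ i' < r ∧ j ≤ c i ∧ j' ≤ c i' ∧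
        f = L i j * L i' (j' + 1) - L i (j + 1) * L i' j'})
    (Δ : Submodule K (MvPolynomial (Fin n) K))
    (hΔ : ∀ f ∈ Δ, f.IsHomogeneous 1)
    (hMΔ : M ≤ Ideal.span (Δ : Set (MvPolynomial (Fin n) K))) :
    (∀ i < r, c i = 0) ∨
    ((∀ i < r, ∀ j ≤ c i, L i j ∈ Δ) ∨ (∀ i < r, ∀ j, 1 ≤ j → j ≤ c i + 1 → L i j ∈ Δ)) ∨
    (∃ i < r, 0 < c i ∧ ∀ j ≤ c i + 1, L i j ∈ Δ) ∨
    ((∃ i < r, 0 < c i) ∧ (∀ i < r, 0 < c i → ∀ j ≤ c i + 1, L i j ∉ Δ) ∧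
      ∃ α : K, α ≠ 0 ∧
        (∀ i < r, 0 < c i → ∃ H : MvPolynomial (Fin n) K, H.IsHomogeneous 1 ∧ H ∉ Δ ∧
          ∀ j ≤ c i + 1, L i j - α ^ j • H ∈ Δ) ∧
        (∀ i < r, c i = 0 → ∃ H : MvPolynomial (Fin n) K, H.IsHomogeneous 1 ∧
          (H = 0 ∨ H ∉ Δ) ∧ L i 0 - H ∈ Δ ∧ L i 1 - α • H ∈ Δ)) := by
  classical
  obtain ⟨Q, hQ⟩ := Submodule.exists_isCompl Δ
  set π : MvPolynomial (Fin n) K →ₗ[K] MvPolynomial (Fin n) K :=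
    Q.subtype ∘ₗ Submodule.projectionOnto Q Δ hQ.symm with hπdef
  have hπker : ∀ f, π f = 0 ↔ f ∈ Δ := by
    intro f
    simp [hπdef, Submodule.projectionOnto_apply_eq_zero_iff]
  have hππ : ∀ f, π (π f) = π f := by
    intro f
    simp [hπdef, Submodule.projectionOnto_apply_left]
  have hπsub : ∀ f, f - π f ∈ Δ := by
    intro f
    rw [← hπker, map_sub, hππ, sub_self]
  have hπhom : ∀ f : MvPolynomial (Fin n) K, f.IsHomogeneous 1 → (π f).IsHomogeneous 1 := by
    intro f hf
    have h2 : (f - π f).IsHomogeneous 1 := hΔ _ (hπsub f)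
    have h3 := hf.sub h2
    simpa using h3
  set φ : MvPolynomial (Fin n) K →ₐ[K] MvPolynomial (Fin n) K :=
    aeval (fun i => π (X i)) with hφdef
  have hφhom1 : ∀ f : MvPolynomial (Fin n) K, f.IsHomogeneous 1 → φ f = π f := by
    intro f hf
    have hrep : f = ∑ i : Fin n, coeff (Finsupp.single i 1) f • X i := homog1_rep hf
    rw [hrep, map_sum, map_sum]
    refine Finset.sum_congr rfl fun i _ => ?_
    rw [map_smul, map_smul, hφdef]
    simp
  have hkerφ : ∀ f ∈ M, φ f = 0 := by
    intro f hf
    have h1 : f ∈ Ideal.span (Δ : Set (MvPolynomial (Fin n) K)) := hMΔ hf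
    have h2 : Ideal.span (Δ : Set (MvPolynomial (Fin n) K)) ≤
        RingHom.ker (φ : MvPolynomial (Fin n) K →+* MvPolynomial (Fin n) K) := by
      rw [Ideal.span_le]
      intro g hg
      rw [SetLike.mem_coe] at hg
      rw [SetLike.mem_coe, RingHom.mem_ker]
      show φ g = 0
      rw [hφhom1 g (hΔ g hg)]
      exact (hπker g).2 hg
    exact h2 h1
  have rel : ∀ i i' j j', i < r → i' < r → j ≤ c i → j' ≤ c i' →
      π (L i j) * π (L i' (j'+1)) = π (L i (j+1)) * π (L i' j') := by
    intro i i' j j' hi hi' hj hj'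
    have hmem : (L i j * L i' (j'+1) - L i (j+1) * L i' j') ∈ M := by
      rw [hM]
      exact Ideal.subset_span ⟨i, i', j, j', hi, hi', hj, hj', rfl⟩
    have h0 := hkerφ _ hmem
    rw [map_sub, map_mul, map_mul, sub_eq_zero] at h0
    rw [hφhom1 _ (hhom i hi j (by omega)), hφhom1 _ (hhom i' hi' (j'+1) (by omega)),
        hφhom1 _ (hhom i hi (j+1) (by omega)), hφhom1 _ (hhom i' hi' j' (by omega))] at h0
    exact h0
  have hlhom : ∀ i < r, ∀ j ≤ c i + 1, (π (L i j)).IsHomogeneous 1 :=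
    fun i hi j hj => hπhom _ (hhom i hi j hj)
  -- Case 1
  by_cases hgen : ∀ i < r, c i = 0
  · exact Or.inl hgen
  push_neg at hgen
  obtain ⟨i0, hi0r, hi0c0⟩ := hgen
  have hi0c : 0 < c i0 := Nat.pos_of_ne_zero hi0c0
  -- Case 3
  by_cases hall : ∃ i < r, 0 < c i ∧ ∀ j ≤ c i + 1, L i j ∈ Δ
  · exact Or.inr (Or.inr (Or.inl hall))
  push_neg at hall
  -- Case 2 (mixed block)
  by_cases hmixc : ∃ i < r, 0 < c i ∧ ∃ j ≤ c i + 1, L i j ∈ Δ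
  · obtain ⟨i, hir, hic, j0, hj0, hj0m⟩ := hmixc
    obtain ⟨j1, hj1, hj1m⟩ := hall i hir hic
    obtain ⟨k, hk, hcase⟩ := exists_adjacent (P := fun j => L i j ∈ Δ) hj0 hj1 hj0m hj1m
    refine Or.inr (Or.inl ?_)
    rcases hcase with ⟨hk1, hk2⟩ | ⟨hk1, hk2⟩
    · -- L i k ∈ Δ, L i (k+1) ∉ Δ : first row in Δ
      left
      intro i' hi' j' hj'
      have h := rel i' i j' k hi' hir hj' hk
      rw [(hπker _).2 hk1, mul_zero] at h
      rcases mul_eq_zero.1 h with h1 | h1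
      · exact (hπker _).1 h1
      · exact absurd ((hπker _).1 h1) hk2
    · -- L i k ∉ Δ, L i (k+1) ∈ Δ : second row in Δ
      right
      intro i' hi' j hj1' hj2'
      obtain ⟨j'', rfl⟩ : ∃ j'', j = j'' + 1 := ⟨j - 1, by omega⟩
      have h := rel i i' k j'' hir hi' hk (by omega)
      rw [(hπker _).2 hk2, zero_mul] at h
      rcases mul_eq_zero.1 h with h1 | h1
      · exact absurd ((hπker _).1 h1) hk1
      · exact (hπker _).1 h1
  push_neg at hmixc
  -- Case 4
  have hlne : ∀ i < r, 0 < c i → ∀ j ≤ c i + 1, π (L i j) ≠ 0 := by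
    intro i hi hci j hj h0
    exact hmixc i hi hci j hj ((hπker _).1 h0)
  have block : ∀ i, i < r → 0 < c i → ∃ β : K, β ≠ 0 ∧ π (L i 1) = β • π (L i 0) := by
    intro i hi hci
    have h := rel i i 0 1 hi hi (by omega) (by omega)
    exact ratio_of_sq (hlhom i hi 0 (by omega)) (hlhom i hi 1 (by omega)) h
      (hlne i hi hci 1 (by omega))
  obtain ⟨α, hα0, hα⟩ := block i0 hi0r hi0c
  have uniq : ∀ i, i < r → 0 < c i → π (L i 1) = α • π (L i 0) := by
    intro i hi hci
    obtain ⟨β, hβ0, hβ⟩ := block i hi hci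
    have h := rel i0 i 0 0 hi0r hi (by omega) (by omega)
    rw [hβ, hα] at h
    have h2 : β • (π (L i0 0) * π (L i 0)) = α • (π (L i0 0) * π (L i 0)) := by
      rw [← mul_smul_comm, ← smul_mul_assoc]
      exact h
    have hne : π (L i0 0) * π (L i 0) ≠ 0 :=
      mul_ne_zero (hlne i0 hi0r hi0c 0 (by omega)) (hlne i hi hci 0 (by omega))
    have hβα : β = α := by
      by_contra hne'
      have h3 : (β - α) • (π (L i0 0) * π (L i 0)) = 0 := by
        rw [sub_smul, h2, sub_self]
      rcases smul_eq_zero.1 h3 with h4 | h4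
      · exact hne' (sub_eq_zero.1 h4)
      · exact hne h4
    rw [hβ, hβα]
  have geo : ∀ i, i < r → 0 < c i → ∀ j ≤ c i + 1, π (L i j) = α ^ j • π (L i 0) := by
    intro i hi hci j
    induction j with
    | zero => intro _; simp
    | succ k ih =>
      intro hk
      have hkc : k ≤ c i := by omega
      have h := rel i i 0 k hi hi (by omega) hkc
      rw [uniq i hi hci, ih (by omega)] at h
      have h0 : π (L i 0) ≠ 0 := hlne i hi hci 0 (by omega)
      have h' : π (L i 0) * π (L i (k+1)) = π (L i 0) * (α ^ (k+1) • π (L i 0)) := by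
        rw [h, smul_eq_C_mul, smul_eq_C_mul, smul_eq_C_mul, pow_succ', C_mul]
        ring
      exact mul_left_cancel₀ h0 h'
  refine Or.inr (Or.inr (Or.inr ⟨⟨i0, hi0r, hi0c⟩, hmixc, α, hα0, ?_, ?_⟩))
  · -- non-generic blocks
    intro i hi hci
    refine ⟨π (L i 0), hlhom i hi 0 (by omega), ?_, ?_⟩
    · intro hmem
      have h1 : π (π (L i 0)) = 0 := (hπker _).2 hmem
      rw [hππ] at h1
      exact hlne i hi hci 0 (by omega) h1
    · intro j hj
      rw [← hπker, map_sub, map_smul, hππ, geo i hi hci j hj, sub_self]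
  · -- generic blocks
    intro i hi hci
    have h := rel i0 i 0 0 hi0r hi (by omega) (by omega)
    rw [hα] at h
    have h0 : π (L i0 0) ≠ 0 := hlne i0 hi0r hi0c 0 (by omega)
    have h1 : π (L i 1) = α • π (L i 0) := by
      apply mul_left_cancel₀ h0
      rw [h, smul_eq_C_mul, smul_eq_C_mul]
      ring
    refine ⟨π (L i 0), hlhom i hi 0 (by omega), ?_, ?_, ?_⟩
    · by_cases hz : π (L i 0) = 0
      · exact Or.inl hz
      · right
        intro hmem
        have h2 : π (π (L i 0)) = 0 := (hπker _).2 hmem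
        rw [hππ] at h2
        exact hz h2
    · rw [← hπker, map_sub, hππ, sub_self]
    · rw [← hπker, map_sub, map_smul, hππ, h1, sub_self]
end
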